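/- Let A and B be groups, W ⊆ F_∞ a set of words, M a normal subgroup of A and N a normal subgroup of B. Then the quotient of the verbal product A ∗_W B by the normal closure of the subgroup generated by (the images of) M and N is isomorphic to the verbal product (A/M) ∗_W (B/N). -/

import Mathlib

open Monoid
open scoped commutatorElement

/-- The verbal subgroup `W(G)`: the subgroup of `G` generated by all evaluations of the
words of `W` at tuples of elements of `G`. -/
def verbalSubgroup (W : Set (FreeGroup ℕ)) (G : Type*) [Group G] : Subgroup G :=
  Subgroup.closure {x | ∃ w ∈ W, ∃ f : ℕ → G, FreeGroup.lift f w = x}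

theorem lift_comp_eval {G H : Type*} [Group G] [Group H] (φ : G →* H) (f : ℕ → G)
    (w : FreeGroup ℕ) : φ (FreeGroup.lift f w) = FreeGroup.lift (φ ∘ f) w := by
  have h : φ.comp (FreeGroup.lift f) = FreeGroup.lift (φ ∘ f) :=
    FreeGroup.ext_hom _ _ (fun a => by simp)
  exact DFunLike.congr_fun h w

theorem verbalSubgroup_map_le {G H : Type*} [Group G] [Group H] (W : Set (FreeGroup ℕ))
    (φ : G →* H) : (verbalSubgroup W G).map φ ≤ verbalSubgroup W H := by
  rw [verbalSubgroup, MonoidHom.map_closure, Subgroup.closure_le]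
  rintro x ⟨y, ⟨w, hw, f, rfl⟩, rfl⟩
  exact Subgroup.subset_closure ⟨w, hw, φ ∘ f, (lift_comp_eval φ f w).symm⟩

/-- Verbal subgroups are normal. -/
instance verbalSubgroup_normal (W : Set (FreeGroup ℕ)) (G : Type*) [Group G] :
    (verbalSubgroup W G).Normal := by
  constructor
  intro n hn g
  have h := verbalSubgroup_map_le (G := G) (H := G) W (MulAut.conj g).toMonoidHom
  have h2 : (MulAut.conj g).toMonoidHom n ∈ verbalSubgroup W G := h ⟨n, hn, rfl⟩
  simpa using h2

/-- The subgroup `[A,B]` of the free product `A ∗ B` generated by the commutators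
`[a,b] = a * b * a⁻¹ * b⁻¹` with `a ∈ A`, `b ∈ B`. -/
def commSubgroup (A B : Type*) [Group A] [Group B] : Subgroup (Coprod A B) :=
  Subgroup.closure {x | ∃ (a : A) (b : B), x = ⁅(Coprod.inl a : Coprod A B), Coprod.inr b⁆}

/-- The kernel of the verbal product: (the normal closure of) `W(A ∗ B) ∩ [A,B]`.
Since `W(A ∗ B) ∩ [A,B]` is in fact a normal subgroup of `A ∗ B`, taking the normal
closure does not change the subgroup. -/
def verbalProductKer (W : Set (FreeGroup ℕ)) (A B : Type*) [Group A] [Group B] :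
    Subgroup (Coprod A B) :=
  Subgroup.normalClosure ((verbalSubgroup W (Coprod A B) ⊓ commSubgroup A B : Subgroup _) : Set _)

instance verbalProductKer_normal (W : Set (FreeGroup ℕ)) (A B : Type*) [Group A] [Group B] :
    (verbalProductKer W A B).Normal := Subgroup.normalClosure_normal

/-- The verbal product `A ∗_W B := (A ∗ B)/(W(A ∗ B) ∩ [A,B])`. -/
abbrev VerbalProduct (W : Set (FreeGroup ℕ)) (A B : Type*) [Group A] [Group B] : Type _ :=
  Coprod A B ⧸ verbalProductKer W A B

/-- The quotient homomorphism `q : A ∗ B → A ∗_W B`. -/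
def vq (W : Set (FreeGroup ℕ)) (A B : Type*) [Group A] [Group B] :
    Coprod A B →* VerbalProduct W A B :=
  QuotientGroup.mk' (verbalProductKer W A B)

/-- The copy of `A` inside the verbal product `A ∗_W B`. -/
def vinl (W : Set (FreeGroup ℕ)) (A B : Type*) [Group A] [Group B] :
    A →* VerbalProduct W A B := (vq W A B).comp Coprod.inl

/-- The copy of `B` inside the verbal product `A ∗_W B`. -/
def vinr (W : Set (FreeGroup ℕ)) (A B : Type*) [Group A] [Group B] :
    B →* VerbalProduct W A B := (vq W A B).comp Coprod.inr

/-- `[A,B]^w`, the image of `[A,B]` in the verbal product `A ∗_W B`. -/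
def commW (W : Set (FreeGroup ℕ)) (A B : Type*) [Group A] [Group B] :
    Subgroup (VerbalProduct W A B) := (commSubgroup A B).map (vq W A B)


section Aux

open Coprod Subgroup Function

variable {A B : Type*} [Group A] [Group B]

theorem verbalSubgroup_map_of_surjective {G H : Type*} [Group G] [Group H]
    (W : Set (FreeGroup ℕ)) (φ : G →* H) (hφ : Surjective φ) :
    (verbalSubgroup W G).map φ = verbalSubgroup W H := by
  refine le_antisymm (verbalSubgroup_map_le W φ) ?_
  rw [verbalSubgroup, Subgroup.closure_le]
  rintro x ⟨w, hw, f, rfl⟩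
  refine ⟨FreeGroup.lift (surjInv hφ ∘ f) w, Subgroup.subset_closure ⟨w, hw, _, rfl⟩, ?_⟩
  rw [lift_comp_eval]
  have : φ ∘ (surjInv hφ ∘ f) = f := funext fun n => surjInv_eq hφ (f n)
  rw [this]

theorem conj_inl_comm (a₀ a : A) (b : B) :
    inl a₀ * ⁅(inl a : Coprod A B), inr b⁆ * (inl a₀)⁻¹ =
      ⁅(inl (a₀ * a) : Coprod A B), inr b⁆ * ⁅(inl a₀ : Coprod A B), inr b⁆⁻¹ := by
  simp only [commutatorElement_def, map_mul, map_inv]; group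

theorem conj_inr_comm (b₀ : B) (a : A) (b : B) :
    inr b₀ * ⁅(inl a : Coprod A B), inr b⁆ * (inr b₀)⁻¹ =
      ⁅(inl a : Coprod A B), inr b₀⁆⁻¹ * ⁅(inl a : Coprod A B), (inr (b₀ * b) : Coprod A B)⁆ := by
  simp only [commutatorElement_def, map_mul, map_inv]; group

theorem commSubgroup_conj_mem (g : Coprod A B) :
    ∀ x ∈ commSubgroup A B, g * x * g⁻¹ ∈ commSubgroup A B := by
  induction g using Coprod.induction_on with
  | inl a₀ =>
    intro x hx
    refine Subgroup.closure_induction ?_ ?_ ?_ ?_ hx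
    · rintro y ⟨a, b, rfl⟩
      rw [conj_inl_comm]
      exact mul_mem (Subgroup.subset_closure ⟨_, _, rfl⟩)
        (inv_mem (Subgroup.subset_closure ⟨_, _, rfl⟩))
    · simpa using one_mem (commSubgroup A B)
    · intro y z _ _ hy hz
      have h : inl a₀ * (y * z) * (inl a₀)⁻¹ =
          (inl a₀ * y * (inl a₀)⁻¹) * (inl a₀ * z * (inl a₀)⁻¹) := by group
      rw [h]; exact mul_mem hy hz
    · intro y _ hy
      have h : inl a₀ * y⁻¹ * (inl a₀)⁻¹ = (inl a₀ * y * (inl a₀)⁻¹)⁻¹ := by group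
      rw [h]; exact inv_mem hy
  | inr b₀ =>
    intro x hx
    refine Subgroup.closure_induction ?_ ?_ ?_ ?_ hx
    · rintro y ⟨a, b, rfl⟩
      rw [conj_inr_comm]
      exact mul_mem (inv_mem (Subgroup.subset_closure ⟨_, _, rfl⟩))
        (Subgroup.subset_closure ⟨_, _, rfl⟩)
    · simpa using one_mem (commSubgroup A B)
    · intro y z _ _ hy hz
      have h : inr b₀ * (y * z) * (inr b₀)⁻¹ =
          (inr b₀ * y * (inr b₀)⁻¹) * (inr b₀ * z * (inr b₀)⁻¹) := by group
      rw [h]; exact mul_mem hy hz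
    · intro y _ hy
      have h : inr b₀ * y⁻¹ * (inr b₀)⁻¹ = (inr b₀ * y * (inr b₀)⁻¹)⁻¹ := by group
      rw [h]; exact inv_mem hy
  | mul g h hg hh =>
    intro x hx
    have he : g * h * x * (g * h)⁻¹ = g * (h * x * h⁻¹) * g⁻¹ := by group
    rw [he]; exact hg _ (hh _ hx)

instance commSubgroup_normal' : (commSubgroup A B).Normal :=
  ⟨fun n hn g => commSubgroup_conj_mem g n hn⟩

/-- The retraction `A ∗ B →* A × B`. -/
def rhoAB (A B : Type*) [Group A] [Group B] : Coprod A B →* A × B :=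
  Coprod.lift (MonoidHom.inl A B) (MonoidHom.inr A B)

theorem commSubgroup_le_ker_rho : commSubgroup A B ≤ (rhoAB A B).ker := by
  rw [commSubgroup, Subgroup.closure_le]
  rintro x ⟨a, b, rfl⟩
  have : rhoAB A B ⁅(inl a : Coprod A B), inr b⁆ =
      ⁅MonoidHom.inl A B a, MonoidHom.inr A B b⁆ := by
    simp [rhoAB, commutatorElement_def]
  simp only [SetLike.mem_coe, MonoidHom.mem_ker, this,
    commutatorElement_eq_one_iff_commute]
  exact MonoidHom.commute_inl_inr a b

theorem ker_rho_le_commSubgroup : (rhoAB A B).ker ≤ commSubgroup A B := by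
  have hcomm : ∀ (a : A) (b : B),
      Commute (((QuotientGroup.mk' (commSubgroup A B)).comp inl) a)
        (((QuotientGroup.mk' (commSubgroup A B)).comp inr) b) := by
    intro a b
    show ((QuotientGroup.mk (inl a) : Coprod A B ⧸ commSubgroup A B) * QuotientGroup.mk (inr b)) =
      QuotientGroup.mk (inr b) * QuotientGroup.mk (inl a)
    rw [← QuotientGroup.mk_mul, ← QuotientGroup.mk_mul, QuotientGroup.eq]
    have h : ((inl a * inr b : Coprod A B))⁻¹ * (inr b * inl a) =
        (⁅(inl a⁻¹ : Coprod A B), inr b⁻¹⁆)⁻¹ := by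
      simp only [commutatorElement_def, map_inv]; group
    rw [h]
    exact inv_mem (Subgroup.subset_closure ⟨a⁻¹, b⁻¹, rfl⟩)
  let θ : A × B →* Coprod A B ⧸ commSubgroup A B :=
    MonoidHom.noncommCoprod ((QuotientGroup.mk' _).comp inl) ((QuotientGroup.mk' _).comp inr) hcomm
  have hθ : θ.comp (rhoAB A B) = QuotientGroup.mk' (commSubgroup A B) := by
    apply Coprod.hom_ext
    · ext a
      simp [θ, rhoAB, MonoidHom.noncommCoprod_apply]
    · ext b
      simp [θ, rhoAB, MonoidHom.noncommCoprod_apply]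
  intro x hx
  rw [MonoidHom.mem_ker] at hx
  have := DFunLike.congr_fun hθ x
  simp only [MonoidHom.comp_apply, hx, map_one] at this
  exact (QuotientGroup.eq_one_iff x).mp this.symm

theorem commSubgroup_map_coprod_le {A' B' : Type*} [Group A'] [Group B']
    (f : A →* A') (g : B →* B') :
    (commSubgroup A B).map (Coprod.map f g) ≤ commSubgroup A' B' := by
  rw [commSubgroup, MonoidHom.map_closure, Subgroup.closure_le]
  rintro _ ⟨_, ⟨a, b, rfl⟩, rfl⟩
  exact Subgroup.subset_closure ⟨f a, g b, by simp [commutatorElement_def]⟩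

theorem coprod_map_surjective {A' B' : Type*} [Group A'] [Group B'] {f : A →* A'} {g : B →* B'}
    (hf : Surjective f) (hg : Surjective g) : Surjective (Coprod.map f g) := by
  intro y
  induction y using Coprod.induction_on with
  | inl a' => obtain ⟨a, rfl⟩ := hf a'; exact ⟨inl a, rfl⟩
  | inr b' => obtain ⟨b, rfl⟩ := hg b'; exact ⟨inr b, rfl⟩
  | mul x y hx hy =>
    obtain ⟨x', rfl⟩ := hx; obtain ⟨y', rfl⟩ := hy; exact ⟨x' * y', map_mul _ _ _⟩

end Aux

-- (appended to aux, plus original defs) main theorem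
section Main

open Coprod Subgroup Function

/-- The quotient of the verbal product `A ∗_W B` by the normal closure of the subgroup
generated by the images of `M` and `N` is isomorphic to the verbal product
`(A/M) ∗_W (B/N)`. -/
theorem verbalProduct_quotient_iso {A B : Type*} [Group A] [Group B] (W : Set (FreeGroup ℕ))
    (M : Subgroup A) (N : Subgroup B) [M.Normal] [N.Normal] :
    Nonempty ((VerbalProduct W A B ⧸ Subgroup.normalClosure
        ((M.map (vinl W A B) ⊔ N.map (vinr W A B) : Subgroup (VerbalProduct W A B)) :
          Set (VerbalProduct W A B))) ≃*
      VerbalProduct W (A ⧸ M) (B ⧸ N)) := by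
  classical
  let π : Coprod A B →* Coprod (A ⧸ M) (B ⧸ N) :=
    Coprod.map (QuotientGroup.mk' M) (QuotientGroup.mk' N)
  have hπ : Surjective π :=
    coprod_map_surjective (QuotientGroup.mk'_surjective M) (QuotientGroup.mk'_surjective N)
  set NCS := Subgroup.normalClosure ((M.map (vinl W A B) ⊔ N.map (vinr W A B) :
      Subgroup (VerbalProduct W A B)) : Set (VerbalProduct W A B)) with hNCS
  let f₁ : Coprod A B →* VerbalProduct W A B ⧸ NCS :=
    (QuotientGroup.mk' NCS).comp (vq W A B)
  let f₂ : Coprod A B →* VerbalProduct W (A ⧸ M) (B ⧸ N) :=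
    (vq W (A ⧸ M) (B ⧸ N)).comp π
  have hs₁ : Surjective f₁ :=
    (QuotientGroup.mk'_surjective NCS).comp (QuotientGroup.mk'_surjective _)
  have hs₂ : Surjective f₂ := (QuotientGroup.mk'_surjective _).comp hπ
  set T := M.map (Coprod.inl : A →* Coprod A B) ⊔ N.map (Coprod.inr : B →* Coprod A B) with hTdef
  set R := Subgroup.normalClosure (T : Set (Coprod A B)) with hRdef
  set L := R ⊔ verbalProductKer W A B with hLdef
  set K' := verbalProductKer W (A ⧸ M) (B ⧸ N) with hK'def
  -- ker f₁ = L
  have hker1 : f₁.ker = L := by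
    have h1 : f₁.ker = NCS.comap (vq W A B) := by
      rw [← MonoidHom.comap_ker, QuotientGroup.ker_mk']
    have hvq : Surjective (vq W A B) := QuotientGroup.mk'_surjective _
    have hT : NCS = R.map (vq W A B) := by
      rw [hRdef, Subgroup.map_normalClosure _ (vq W A B) hvq, hNCS]
      congr 1
      rw [← Subgroup.coe_map, hTdef, Subgroup.map_sup, Subgroup.map_map, Subgroup.map_map]
      rfl
    rw [h1, hT, Subgroup.comap_map_eq, hLdef]
    congr 1
    exact QuotientGroup.ker_mk' _
  -- ker π ≤ R
  have hkerπ : π.ker ≤ R := by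
    have hMR : ∀ m ∈ M, (Coprod.inl m : Coprod A B) ∈ R := fun m hm =>
      Subgroup.le_normalClosure (Subgroup.mem_sup_left ⟨m, hm, rfl⟩)
    have hNR : ∀ n ∈ N, (Coprod.inr n : Coprod A B) ∈ R := fun n hn =>
      Subgroup.le_normalClosure (Subgroup.mem_sup_right ⟨n, hn, rfl⟩)
    let φA : A ⧸ M →* Coprod A B ⧸ R :=
      QuotientGroup.lift M ((QuotientGroup.mk' R).comp Coprod.inl)
        (fun m hm => (QuotientGroup.eq_one_iff _).mpr (hMR m hm))
    let φB : B ⧸ N →* Coprod A B ⧸ R :=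
      QuotientGroup.lift N ((QuotientGroup.mk' R).comp Coprod.inr)
        (fun n hn => (QuotientGroup.eq_one_iff _).mpr (hNR n hn))
    let gg : Coprod (A ⧸ M) (B ⧸ N) →* Coprod A B ⧸ R := Coprod.lift φA φB
    have hg : gg.comp π = QuotientGroup.mk' R := by
      apply Coprod.hom_ext
      · ext a
        simp [gg, φA, π]
        rfl
      · ext b
        simp [gg, φB, π]
        rfl
    intro x hx
    rw [MonoidHom.mem_ker] at hx
    have := DFunLike.congr_fun hg x
    simp only [MonoidHom.comp_apply, hx, map_one] at this
    exact (QuotientGroup.eq_one_iff x).mp this.symm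
  -- K' ≤ map π L
  haveI hLnormal : L.Normal := Subgroup.sup_normal _ _
  have hK'le : K' ≤ L.map π := by
    haveI : (L.map π).Normal := Subgroup.Normal.map hLnormal π hπ
    apply Subgroup.normalClosure_le_normal
    rintro x' ⟨hxv, hxc⟩
    have hx'mem : x' ∈ (verbalSubgroup W (Coprod A B)).map π := by
      rw [verbalSubgroup_map_of_surjective W π hπ]; exact hxv
    obtain ⟨y, hy, rfl⟩ := hx'mem
    have hρ'x : rhoAB (A ⧸ M) (B ⧸ N) (π y) = 1 := commSubgroup_le_ker_rho hxc
    have hcommute : ((QuotientGroup.mk' M).prodMap (QuotientGroup.mk' N)).comp (rhoAB A B)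
        = (rhoAB (A ⧸ M) (B ⧸ N)).comp π := by
      apply Coprod.hom_ext
      · ext a <;>
          simp [rhoAB, π, MonoidHom.comp_apply, Coprod.lift_apply_inl, Coprod.lift_apply_inr,
            Coprod.map_apply_inl, Coprod.map_apply_inr]
      · ext b <;>
          simp [rhoAB, π, MonoidHom.comp_apply, Coprod.lift_apply_inl, Coprod.lift_apply_inr,
            Coprod.map_apply_inl, Coprod.map_apply_inr]
    have h1 : ((QuotientGroup.mk' M).prodMap (QuotientGroup.mk' N)) (rhoAB A B y) = 1 := by
      have := DFunLike.congr_fun hcommute y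
      simp only [MonoidHom.comp_apply] at this
      rw [this, hρ'x]
    have hm : (rhoAB A B y).1 ∈ M := by
      have := congrArg Prod.fst h1
      simpa [QuotientGroup.eq_one_iff] using this
    have hn : (rhoAB A B y).2 ∈ N := by
      have := congrArg Prod.snd h1
      simpa [QuotientGroup.eq_one_iff] using this
    have hm_v : (rhoAB A B y).1 ∈ verbalSubgroup W A :=
      verbalSubgroup_map_le W ((MonoidHom.fst A B).comp (rhoAB A B)) ⟨y, hy, rfl⟩
    have hn_v : (rhoAB A B y).2 ∈ verbalSubgroup W B :=
      verbalSubgroup_map_le W ((MonoidHom.snd A B).comp (rhoAB A B)) ⟨y, hy, rfl⟩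
    set m := (rhoAB A B y).1 with hmdef
    set n := (rhoAB A B y).2 with hndef
    set y'' := Coprod.inl m⁻¹ * Coprod.inr n⁻¹ * y with hy''def
    have hy''v : y'' ∈ verbalSubgroup W (Coprod A B) :=
      mul_mem (mul_mem (verbalSubgroup_map_le W Coprod.inl ⟨m⁻¹, inv_mem hm_v, rfl⟩)
        (verbalSubgroup_map_le W Coprod.inr ⟨n⁻¹, inv_mem hn_v, rfl⟩)) hy
    have hy''c : y'' ∈ commSubgroup A B := by
      apply ker_rho_le_commSubgroup
      rw [MonoidHom.mem_ker, hy''def, map_mul, map_mul]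
      have h2 : rhoAB A B (Coprod.inl m⁻¹) = (m⁻¹, 1) := by simp [rhoAB]
      have h3 : rhoAB A B (Coprod.inr n⁻¹) = (1, n⁻¹) := by simp [rhoAB]
      rw [h2, h3]
      ext
      · simp [← hmdef]
      · simp [← hndef]
    have hπy'' : π y'' = π y := by
      have hm1 : π (Coprod.inl m⁻¹) = 1 := by
        have h : ((m : A) : A ⧸ M) = 1 := (QuotientGroup.eq_one_iff _).mpr hm
        simp [π, h]
      have hn1 : π (Coprod.inr n⁻¹) = 1 := by
        have h : ((n : B) : B ⧸ N) = 1 := (QuotientGroup.eq_one_iff _).mpr hn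
        simp [π, h]
      rw [hy''def, map_mul, map_mul, hm1, hn1, one_mul, one_mul]
    exact ⟨y'', Subgroup.mem_sup_right (Subgroup.subset_normalClosure ⟨hy''v, hy''c⟩), hπy''⟩
  -- ker f₂ = L
  have hker2 : f₂.ker = L := by
    have h2 : f₂.ker = K'.comap π := by
      rw [← MonoidHom.comap_ker]
      congr 1
      exact QuotientGroup.ker_mk' _
    rw [h2]
    haveI : (K'.comap π).Normal := Subgroup.Normal.comap inferInstance π
    refine le_antisymm ?_ ?_
    · intro x hx
      rw [Subgroup.mem_comap] at hx
      obtain ⟨z, hz, hzx⟩ := hK'le hx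
      have hker : z⁻¹ * x ∈ π.ker := by
        rw [MonoidHom.mem_ker, map_mul, map_inv, hzx]
        simp
      have : z⁻¹ * x ∈ L := Subgroup.mem_sup_left (hkerπ hker)
      have := mul_mem hz this
      simpa using this
    · rw [hLdef]
      refine sup_le ?_ ?_
      · apply Subgroup.normalClosure_le_normal
        have hTle : T ≤ K'.comap π := by
          rw [hTdef]
          refine sup_le ?_ ?_
          · rintro _ ⟨m, hm, rfl⟩
            rw [Subgroup.mem_comap]
            have h : ((m : A) : A ⧸ M) = 1 := (QuotientGroup.eq_one_iff _).mpr hm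
            have hone : π (Coprod.inl m) = 1 := by simp [π, h]
            rw [hone]; exact one_mem _
          · rintro _ ⟨n, hn, rfl⟩
            rw [Subgroup.mem_comap]
            have h : ((n : B) : B ⧸ N) = 1 := (QuotientGroup.eq_one_iff _).mpr hn
            have hone : π (Coprod.inr n) = 1 := by simp [π, h]
            rw [hone]; exact one_mem _
        exact fun x hx => hTle hx
      · apply Subgroup.normalClosure_le_normal
        rintro x ⟨hxv, hxc⟩
        rw [SetLike.mem_coe, Subgroup.mem_comap]
        exact Subgroup.subset_normalClosure
          ⟨verbalSubgroup_map_le W π ⟨x, hxv, rfl⟩,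
           commSubgroup_map_coprod_le _ _ ⟨x, hxc, rfl⟩⟩
  have hker : f₁.ker = f₂.ker := by rw [hker1, hker2]
  exact ⟨(QuotientGroup.quotientKerEquivOfSurjective f₁ hs₁).symm.trans
    ((QuotientGroup.quotientMulEquivOfEq hker).trans
      (QuotientGroup.quotientKerEquivOfSurjective f₂ hs₂))⟩

end Main
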